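/- Let C be a category and S(C) the cofree site category (objects: pairs (c,F) of an object with a filter of sieves; morphisms: u : (c,F) ⟶ (c',F') with u*R ∈ F for all R ∈ F'). A section J : C ⥤ S(C) of the projection π : S(C) ⥤ C (i.e., π ∘ J = id_C) is precisely the same data as a Grothendieck coverage on C: an assignment of an upward-closed set J(c) of sieves on c containing the maximal sieve, stable under pullback sieves along all morphisms. -/

import Mathlib

open CategoryTheory

/-- Objects of the cofree site `S(C)`: an object of `C` together with a filter of
sieves on it (upward-closed, containing the maximal sieve). -/
structure CofreeSiteObj (C : Type*) [Category C] where
  pt : C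
  filt : Set (Sieve pt)
  top_mem : (⊤ : Sieve pt) ∈ filt
  up_closed : ∀ {S T : Sieve pt}, S ∈ filt → S ≤ T → T ∈ filt

/-- The cofree site category: morphisms `(c,F) ⟶ (c',F')` are morphisms
`u : c ⟶ c'` such that `u*R ∈ F` for every `R ∈ F'`. -/
instance cofreeSiteCategory (C : Type*) [Category C] : Category (CofreeSiteObj C) where
  Hom A B := { u : A.pt ⟶ B.pt // ∀ R ∈ B.filt, Sieve.pullback u R ∈ A.filt }
  id A := ⟨𝟙 A.pt, fun R hR => by simpa using hR⟩
  comp {A B E} u v := ⟨u.1 ≫ v.1, fun R hR => by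
    rw [Sieve.pullback_comp]; exact u.2 _ (v.2 R hR)⟩
  id_comp u := by apply Subtype.ext; simp
  comp_id u := by apply Subtype.ext; simp
  assoc u v w := by apply Subtype.ext; simp

/-- The projection from the cofree site to the base category. -/
def cofreeSiteProj (C : Type*) [Category C] : CofreeSiteObj C ⥤ C where
  obj A := A.pt
  map u := u.1

section Aux

variable {C : Type*} [Category C]

lemma CofreeSite.eqToHom_val {A B : CofreeSiteObj C} (p : A = B) :
    (eqToHom p).1 = eqToHom (congrArg CofreeSiteObj.pt p) := by
  subst p; rfl

lemma CofreeSite.comp_val {A B E : CofreeSiteObj C} (u : A ⟶ B) (v : B ⟶ E) :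
    (u ≫ v).1 = u.1 ≫ v.1 := rfl

lemma CofreeSite.obj_eq (A : CofreeSiteObj C) {c : C} (e : A.pt = c) :
    (⟨c, {S | Sieve.pullback (eqToHom e) S ∈ A.filt},
      by simp [A.top_mem],
      fun hS hle => A.up_closed hS (Sieve.pullback_monotone _ hle)⟩ : CofreeSiteObj C) = A := by
  subst e
  cases A with
  | mk pt filt htop hup =>
    congr 1
    ext S
    simp

/-- From coverage data to a section of the projection. -/
def CofreeSite.toSec
    (J : { J : ∀ c : C, Set (Sieve c) //
          (∀ c : C, (⊤ : Sieve c) ∈ J c) ∧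
          (∀ (c : C) (S T : Sieve c), S ∈ J c → S ≤ T → T ∈ J c) ∧
          (∀ {c c' : C} (u : c ⟶ c'), ∀ R ∈ J c', Sieve.pullback u R ∈ J c) }) :
    { F : C ⥤ CofreeSiteObj C // F ⋙ cofreeSiteProj C = 𝟭 C } :=
  ⟨{ obj := fun c => ⟨c, J.1 c, J.2.1 c, fun hS hle => J.2.2.1 c _ _ hS hle⟩,
     map := fun u => ⟨u, fun R hR => J.2.2.2 u R hR⟩,
     map_id := fun c => rfl,
     map_comp := fun u v => rfl }, rfl⟩

/-- From a section of the projection to coverage data. -/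
def CofreeSite.fromSec
    (Fh : { F : C ⥤ CofreeSiteObj C // F ⋙ cofreeSiteProj C = 𝟭 C }) :
    { J : ∀ c : C, Set (Sieve c) //
          (∀ c : C, (⊤ : Sieve c) ∈ J c) ∧
          (∀ (c : C) (S T : Sieve c), S ∈ J c → S ≤ T → T ∈ J c) ∧
          (∀ {c c' : C} (u : c ⟶ c'), ∀ R ∈ J c', Sieve.pullback u R ∈ J c) } := by
  obtain ⟨F, h⟩ := Fh
  have e : ∀ c : C, (F.obj c).pt = c := fun c => Functor.congr_obj h c
  refine ⟨fun c => {S : Sieve c | Sieve.pullback (eqToHom (e c)) S ∈ (F.obj c).filt},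
    fun c => by simp [(F.obj c).top_mem], fun c S T hS hle =>
      (F.obj c).up_closed hS (Sieve.pullback_monotone _ hle), ?_⟩
  intro c c' u R hR
  have hu := (F.map u).2 _ hR
  have hval : (F.map u).1 = eqToHom (e c) ≫ u ≫ eqToHom (e c').symm := by
    have := Functor.congr_hom h u
    simpa [cofreeSiteProj] using this
  rw [hval] at hu
  simp only [Set.mem_setOf_eq]
  have : Sieve.pullback (eqToHom (e c) ≫ u ≫ eqToHom (e c').symm)
      (Sieve.pullback (eqToHom (e c')) R)
      = Sieve.pullback (eqToHom (e c)) (Sieve.pullback u R) := by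
    simp [← Sieve.pullback_comp]
  rwa [this] at hu

end Aux

/-- Sections of the projection `π : S(C) ⥤ C` are precisely the same data as
Grothendieck coverages on `C`. -/
theorem stmt_18 {C : Type*} [Category C] :
    Nonempty
      ({ F : C ⥤ CofreeSiteObj C // F ⋙ cofreeSiteProj C = 𝟭 C } ≃
       { J : ∀ c : C, Set (Sieve c) //
          (∀ c : C, (⊤ : Sieve c) ∈ J c) ∧
          (∀ (c : C) (S T : Sieve c), S ∈ J c → S ≤ T → T ∈ J c) ∧
          (∀ {c c' : C} (u : c ⟶ c'), ∀ R ∈ J c', Sieve.pullback u R ∈ J c) }) := by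
  refine ⟨⟨CofreeSite.fromSec, CofreeSite.toSec, ?_, ?_⟩⟩
  · rintro ⟨F, h⟩
    apply Subtype.ext
    dsimp only
    have hobj : ∀ c : C, (CofreeSite.toSec (CofreeSite.fromSec ⟨F, h⟩)).1.obj c = F.obj c :=
      fun c => CofreeSite.obj_eq (F.obj c) (Functor.congr_obj h c)
    refine CategoryTheory.Functor.ext hobj (fun c c' u => ?_)
    apply Subtype.ext
    rw [CofreeSite.comp_val, CofreeSite.comp_val, CofreeSite.eqToHom_val, CofreeSite.eqToHom_val]
    have hval : (F.map u).1 = eqToHom (Functor.congr_obj h c) ≫ u ≫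
        eqToHom (Functor.congr_obj h c').symm := by
      have := Functor.congr_hom h u
      simpa [cofreeSiteProj] using this
    show u = eqToHom (Functor.congr_obj h c).symm ≫ (F.map u).1 ≫ eqToHom (Functor.congr_obj h c')
    rw [hval]
    have e : ∀ x : C, (F.obj x).pt = x := fun x => Functor.congr_obj h x
    show u = eqToHom (e c).symm ≫ (eqToHom (e c) ≫ u ≫ eqToHom (e c').symm) ≫ eqToHom (e c')
    simp
  · rintro ⟨J, htop, hup, hpull⟩
    apply Subtype.ext
    funext c
    ext S
    show Sieve.pullback (𝟙 c) S ∈ J c ↔ S ∈ J c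
    rw [Sieve.pullback_id]
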